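/- For 1 ≤ d ≤ n−1 with 2d ≤ n, the variance of the number of d-descents of a uniformly random permutation in S_n equals (n+d)/12. -/

import Mathlib

open Finset Equiv Nat

-- reindexing
lemma reindex {n : ℕ} (g : Equiv.Perm (Fin n)) (f : Equiv.Perm (Fin n) → ℚ) :
    ∑ σ : Equiv.Perm (Fin n), f (σ * g) = ∑ σ, f σ :=
  Equiv.sum_comp (Equiv.mulRight g) f

lemma two_sum {α} [LinearOrder α] (u v : α) (h : u ≠ v) :
    (if v < u then (1:ℚ) else 0) + (if u < v then 1 else 0) = 1 := by
  rcases h.lt_or_gt with h1 | h1 <;> simp [h1, asymm h1]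

lemma count_two {n : ℕ} (a b : Fin n) (hab : a ≠ b) :
    ∑ σ : Equiv.Perm (Fin n), (if σ b < σ a then (1:ℚ) else 0) = (n ! : ℚ) / 2 := by
  have key : ∑ σ : Equiv.Perm (Fin n), (if σ b < σ a then (1:ℚ) else 0)
      = ∑ σ : Equiv.Perm (Fin n), (if σ a < σ b then (1:ℚ) else 0) := by
    have := reindex (Equiv.swap a b) (fun σ => if σ b < σ a then (1:ℚ) else 0)
    simpa [Equiv.Perm.mul_apply, Equiv.swap_apply_left, Equiv.swap_apply_right] using this.symm
  have total : ∑ σ : Equiv.Perm (Fin n),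
      ((if σ b < σ a then (1:ℚ) else 0) + (if σ a < σ b then 1 else 0)) = (n ! : ℚ) := by
    rw [Finset.sum_congr rfl (fun σ _ => two_sum _ _ (σ.injective.ne hab))]
    simp [Fintype.card_perm]
  rw [Finset.sum_add_distrib, ← key] at total
  linarith

lemma four_sum {α} [LinearOrder α] (u v w x : α) (h1 : u ≠ v) (h2 : w ≠ x) :
    ((if v < u ∧ x < w then (1:ℚ) else 0) + (if u < v ∧ x < w then 1 else 0)) +
    ((if v < u ∧ w < x then 1 else 0) + (if u < v ∧ w < x then 1 else 0)) = 1 := by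
  rcases h1.lt_or_gt with a | a <;> rcases h2.lt_or_gt with b | b <;>
    simp [a, b, asymm a, asymm b]

set_option linter.unreachableTactic false in
set_option linter.unusedTactic false in
lemma six_sum {α} [LinearOrder α] (u v w : α) (h1 : u ≠ v) (h2 : u ≠ w) (h3 : v ≠ w) :
    ((if w < v ∧ v < u then (1:ℚ) else 0) + (if v < w ∧ w < u then 1 else 0) +
     (if w < u ∧ u < v then 1 else 0)) +
    ((if u < w ∧ w < v then 1 else 0) + (if v < u ∧ u < w then 1 else 0) +
     (if u < v ∧ v < w then 1 else 0)) = 1 := by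
  rcases h1.lt_or_gt with a | a <;> rcases h2.lt_or_gt with b | b <;>
    rcases h3.lt_or_gt with c | c <;>
    simp [a, b, c, asymm a, asymm b, asymm c, not_lt_of_gt] <;>
    first
    | exact absurd (a.trans c) (asymm b)
    | exact absurd (c.trans a) (asymm b)
    | exact absurd (b.trans c) (asymm a)
    | exact absurd (c.trans b) (asymm a)
    | exact absurd (a.trans b) (asymm c)
    | exact absurd (b.trans a) (asymm c)

lemma count_pair_perm {n : ℕ} (g : Equiv.Perm (Fin n)) (a b c e : Fin n) :
    ∑ σ : Equiv.Perm (Fin n), (if σ (g b) < σ (g a) ∧ σ (g e) < σ (g c) then (1:ℚ) else 0)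
      = ∑ σ : Equiv.Perm (Fin n), (if σ b < σ a ∧ σ e < σ c then (1:ℚ) else 0) := by
  exact
    reindex g (fun σ => if σ b < σ a ∧ σ e < σ c then (1:ℚ) else 0)

lemma count_four {n : ℕ} (a b c e : Fin n) (hab : a ≠ b) (hce : c ≠ e)
    (hac : a ≠ c) (hae : a ≠ e) (hbc : b ≠ c) (hbe : b ≠ e) :
    ∑ σ : Equiv.Perm (Fin n), (if σ b < σ a ∧ σ e < σ c then (1:ℚ) else 0)
      = (n ! : ℚ) / 4 := by
  have k1 := count_pair_perm (Equiv.swap a b) a b c e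
  rw [Equiv.swap_apply_left, Equiv.swap_apply_right,
    Equiv.swap_apply_of_ne_of_ne hac.symm hbc.symm,
    Equiv.swap_apply_of_ne_of_ne hae.symm hbe.symm] at k1
  have k2 := count_pair_perm (Equiv.swap c e) a b c e
  rw [Equiv.swap_apply_left, Equiv.swap_apply_right,
    Equiv.swap_apply_of_ne_of_ne hac hae, Equiv.swap_apply_of_ne_of_ne hbc hbe] at k2
  have k3 := count_pair_perm (Equiv.swap a b * Equiv.swap c e) a b c e
  simp only [Equiv.Perm.mul_apply, Equiv.swap_apply_left, Equiv.swap_apply_right,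
    Equiv.swap_apply_of_ne_of_ne hac hae, Equiv.swap_apply_of_ne_of_ne hbc hbe,
    Equiv.swap_apply_of_ne_of_ne hac.symm hbc.symm,
    Equiv.swap_apply_of_ne_of_ne hae.symm hbe.symm] at k3
  have total : ∑ σ : Equiv.Perm (Fin n),
      (((if σ b < σ a ∧ σ e < σ c then (1:ℚ) else 0) + (if σ a < σ b ∧ σ e < σ c then 1 else 0)) +
       ((if σ b < σ a ∧ σ c < σ e then 1 else 0) + (if σ a < σ b ∧ σ c < σ e then 1 else 0)))
      = (n ! : ℚ) := by
    rw [Finset.sum_congr rfl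
      (fun σ _ => four_sum _ _ _ _ (σ.injective.ne hab) (σ.injective.ne hce))]
    simp [Fintype.card_perm]
  simp only [Finset.sum_add_distrib] at total
  rw [k1, k2, k3] at total
  linarith

lemma count_tri_perm {n : ℕ} (g : Equiv.Perm (Fin n)) (a b c : Fin n) :
    ∑ σ : Equiv.Perm (Fin n), (if σ (g c) < σ (g b) ∧ σ (g b) < σ (g a) then (1:ℚ) else 0)
      = ∑ σ : Equiv.Perm (Fin n), (if σ c < σ b ∧ σ b < σ a then (1:ℚ) else 0) := by
  exact
    reindex g (fun σ => if σ c < σ b ∧ σ b < σ a then (1:ℚ) else 0)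

lemma count_six {n : ℕ} (a b c : Fin n) (hab : a ≠ b) (hac : a ≠ c) (hbc : b ≠ c) :
    ∑ σ : Equiv.Perm (Fin n), (if σ c < σ b ∧ σ b < σ a then (1:ℚ) else 0)
      = (n ! : ℚ) / 6 := by
  -- pattern (a,c,b) : g = swap b c
  have k2 := count_tri_perm (Equiv.swap b c) a c b
  -- pattern (b,a,c) : g = swap a b
  have k3 := count_tri_perm (Equiv.swap a b) b a c
  -- pattern (b,c,a) : g a = b, g b = c, g c = a
  have k4 := count_tri_perm (Equiv.swap a b * Equiv.swap b c) c a b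
  -- pattern (c,a,b) : g a = c, g b = a, g c = b
  have k5 := count_tri_perm (Equiv.swap a b * Equiv.swap a c) b c a
  -- pattern (c,b,a) : g = swap a c
  have k6 := count_tri_perm (Equiv.swap a c) c b a
  simp only [Equiv.Perm.mul_apply, Equiv.swap_apply_left, Equiv.swap_apply_right,
    Equiv.swap_apply_of_ne_of_ne hab hac, Equiv.swap_apply_of_ne_of_ne hab.symm hbc,
    Equiv.swap_apply_of_ne_of_ne hac.symm hbc.symm] at k2 k3 k4 k5 k6
  have total : ∑ σ : Equiv.Perm (Fin n),
      (((if σ c < σ b ∧ σ b < σ a then (1:ℚ) else 0) + (if σ b < σ c ∧ σ c < σ a then 1 else 0) +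
        (if σ c < σ a ∧ σ a < σ b then 1 else 0)) +
       ((if σ a < σ c ∧ σ c < σ b then 1 else 0) + (if σ b < σ a ∧ σ a < σ c then 1 else 0) +
        (if σ a < σ b ∧ σ b < σ c then 1 else 0))) = (n ! : ℚ) := by
    rw [Finset.sum_congr rfl (fun σ _ => six_sum (σ a) (σ b) (σ c)
      (σ.injective.ne hab) (σ.injective.ne hac) (σ.injective.ne hbc))]
    simp [Fintype.card_perm]
  simp only [Finset.sum_add_distrib] at total
  rw [← k2, ← k3, ← k4, ← k5, ← k6] at total
  linarith

def pt (n : ℕ) (hn : 0 < n) (i : ℕ) : Fin n := ⟨i % n, Nat.mod_lt _ hn⟩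

lemma pt_val {n : ℕ} (hn : 0 < n) {i : ℕ} (h : i < n) : (pt n hn i : ℕ) = i :=
  Nat.mod_eq_of_lt h

lemma X_eq (n d : ℕ) (hn : 0 < n) (σ : Equiv.Perm (Fin n)) :
    ((Finset.univ.filter fun p : Fin n × Fin n =>
        (p.2 : ℕ) = (p.1 : ℕ) + d ∧ σ p.2 < σ p.1).card : ℚ)
      = ∑ i ∈ Finset.range (n - d),
          (if σ (pt n hn (i + d)) < σ (pt n hn i) then (1:ℚ) else 0) := by
  have g_def : ∀ i : ℕ, True := fun _ => trivial
  set g : ℕ → ℚ := fun i => if i + d < n then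
      (if σ (pt n hn (i + d)) < σ (pt n hn i) then (1:ℚ) else 0) else 0 with hg
  rw [Finset.card_filter]
  push_cast
  rw [Fintype.sum_prod_type]
  have inner : ∀ a : Fin n,
      (∑ b : Fin n, if (b : ℕ) = (a : ℕ) + d ∧ σ b < σ a then (1:ℚ) else 0) = g (a : ℕ) := by
    intro a
    rw [hg]
    simp only
    split_ifs with h h2
    · rw [Finset.sum_eq_single (pt n hn ((a : ℕ) + d))]
      · rw [if_pos]
        refine ⟨pt_val hn h, ?_⟩
        have : pt n hn (a : ℕ) = a := Fin.ext (pt_val hn a.isLt)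
        rwa [this] at h2
      · intro b _ hb
        rw [if_neg]
        rintro ⟨h1, -⟩
        exact hb (Fin.ext (by rw [h1, pt_val hn h]))
      · simp
    · apply Finset.sum_eq_zero
      intro b _
      rw [if_neg]
      rintro ⟨h1, hlt⟩
      have hb : b = pt n hn ((a : ℕ) + d) := Fin.ext (by rw [h1, pt_val hn h])
      have ha : pt n hn (a : ℕ) = a := Fin.ext (pt_val hn a.isLt)
      exact h2 (by rw [ha, ← hb]; exact hlt)
    · apply Finset.sum_eq_zero
      intro b _
      rw [if_neg]
      rintro ⟨h1, -⟩
      exact h (by have := b.isLt; omega)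
  rw [Finset.sum_congr rfl (fun a _ => inner a), Fin.sum_univ_eq_sum_range g n]
  rw [← Finset.sum_subset (Finset.range_subset_range.2 (Nat.sub_le n d))]
  · apply Finset.sum_congr rfl
    intro i hi
    rw [Finset.mem_range] at hi
    rw [hg]
    simp only
    rw [if_pos (by omega)]
  · intro i _ hi
    rw [Finset.mem_range] at hi
    rw [hg]
    simp only
    rw [if_neg (by omega)]

lemma ind_mul_ind (A B : Prop) [Decidable A] [Decidable B] :
    (if A then (1:ℚ) else 0) * (if B then 1 else 0) = if A ∧ B then 1 else 0 := by
  by_cases hA : A <;> by_cases hB : B <;> simp [hA, hB]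

lemma count_six' {n : ℕ} (a b c : Fin n) (hab : a ≠ b) (hac : a ≠ c) (hbc : b ≠ c) :
    ∑ σ : Equiv.Perm (Fin n), (if σ b < σ a ∧ σ c < σ b then (1:ℚ) else 0)
      = (n ! : ℚ) / 6 := by
  rw [← count_six a b c hab hac hbc]
  exact Finset.sum_congr rfl fun σ _ => if_congr and_comm rfl rfl

lemma pt_ne {n : ℕ} (hn : 0 < n) {i j : ℕ} (hi : i < n) (hj : j < n) (h : i ≠ j) :
    pt n hn i ≠ pt n hn j := by
  intro hEq
  exact h (by rw [← pt_val hn hi, ← pt_val hn hj, hEq])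

lemma Cval (n d : ℕ) (hn : 0 < n) (hd : 1 ≤ d) (i j : ℕ) (hi : i + d < n) (hj : j + d < n) :
    (∑ σ : Equiv.Perm (Fin n), (if σ (pt n hn (i+d)) < σ (pt n hn i) then (1:ℚ) else 0) *
        (if σ (pt n hn (j+d)) < σ (pt n hn j) then (1:ℚ) else 0))
      = if i = j then (n ! : ℚ)/2 else if j = i + d ∨ i = j + d then (n ! : ℚ)/6
        else (n ! : ℚ)/4 := by
  simp only [ind_mul_ind]
  by_cases hij : i = j
  · subst hij
    rw [if_pos rfl, Finset.sum_congr rfl (fun σ _ => if_congr (and_self_iff) rfl rfl)]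
    exact count_two _ _ (pt_ne hn (by omega) (by omega) (by omega))
  · rw [if_neg hij]
    by_cases hadj : j = i + d ∨ i = j + d
    · rw [if_pos hadj]
      rcases hadj with h | h
      · subst h
        exact count_six' (pt n hn i) (pt n hn (i+d)) (pt n hn (i+d+d))
          (pt_ne hn (by omega) (by omega) (by omega))
          (pt_ne hn (by omega) (by omega) (by omega))
          (pt_ne hn (by omega) (by omega) (by omega))
      · subst h
        exact count_six (pt n hn j) (pt n hn (j+d)) (pt n hn (j+d+d))
          (pt_ne hn (by omega) (by omega) (by omega))
          (pt_ne hn (by omega) (by omega) (by omega))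
          (pt_ne hn (by omega) (by omega) (by omega))
    · rw [if_neg hadj]
      push_neg at hadj
      exact count_four (pt n hn i) (pt n hn (i+d)) (pt n hn j) (pt n hn (j+d))
        (pt_ne hn (by omega) (by omega) (by omega))
        (pt_ne hn (by omega) (by omega) (by omega))
        (pt_ne hn (by omega) (by omega) (by omega))
        (pt_ne hn (by omega) (by omega) (by omega))
        (pt_ne hn (by omega) (by omega) (by omega))
        (pt_ne hn (by omega) (by omega) (by omega))

lemma grid (m d : ℕ) (hd : 1 ≤ d) (Q : ℚ) :
    (∑ i ∈ Finset.range m, ∑ j ∈ Finset.range m,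
      (if i = j then Q/2 else if j = i + d ∨ i = j + d then Q/6 else Q/4))
    = (m:ℚ)^2 * (Q/4) + m * (Q/4) + ((m - d : ℕ) : ℚ) * (Q/6 - Q/4) * 2 := by
  have point : ∀ i j : ℕ,
      (if i = j then Q/2 else if j = i + d ∨ i = j + d then Q/6 else Q/4)
      = (Q/4 + (if i = j then Q/4 else 0)) + ((if j = i + d then Q/6 - Q/4 else 0)
        + (if i = j + d then Q/6 - Q/4 else 0)) := by
    intro i j
    split_ifs <;> first | omega | ring
  simp only [point, Finset.sum_add_distrib]
  have hA : ∑ _i ∈ Finset.range m, ∑ _j ∈ Finset.range m, Q/4 = (m:ℚ)^2*(Q/4) := by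
    simp [Finset.sum_const, Finset.card_range, nsmul_eq_mul]; ring
  have hB : ∑ i ∈ Finset.range m, ∑ j ∈ Finset.range m, (if i = j then Q/4 else 0)
      = (m:ℚ) * (Q/4) := by
    have h1 : ∀ i ∈ Finset.range m, ∑ j ∈ Finset.range m, (if i = j then Q/4 else 0)
        = Q/4 := by
      intro i hi
      rw [Finset.sum_ite_eq, if_pos hi]
    rw [Finset.sum_congr rfl h1]
    simp [Finset.sum_const, Finset.card_range, nsmul_eq_mul]
  have hC : ∀ c : ℚ, (∑ i ∈ Finset.range m, ∑ j ∈ Finset.range m,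
      (if j = i + d then c else 0)) = ((m - d : ℕ) : ℚ) * c := by
    intro c
    have h1 : ∀ i ∈ Finset.range m, (∑ j ∈ Finset.range m, (if j = i + d then c else 0))
        = if i ∈ Finset.range (m - d) then c else 0 := by
      intro i _
      rw [Finset.sum_ite_eq']
      exact if_congr (by simp only [Finset.mem_range]; omega) rfl rfl
    rw [Finset.sum_congr rfl h1, Finset.sum_ite_mem,
      Finset.inter_eq_right.mpr (Finset.range_subset_range.2 (Nat.sub_le m d))]
    simp [Finset.sum_const, Finset.card_range, nsmul_eq_mul]
  have hD : (∑ i ∈ Finset.range m, ∑ j ∈ Finset.range m,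
      (if i = j + d then Q/6 - Q/4 else 0)) = ((m - d : ℕ) : ℚ) * (Q/6 - Q/4) := by
    rw [Finset.sum_comm]
    exact hC (Q/6 - Q/4)
  rw [hA, hB, hC, hD]
  ring


/-- For `1 ≤ d ≤ n-1` with `2d ≤ n`, the variance of the number of `d`-descents
of a uniformly random permutation in `S_n` equals `(n+d)/12`. -/
theorem var_d_descents_small_d (n d : ℕ) (hd : 1 ≤ d) (hdn : d ≤ n - 1) (h2 : 2 * d ≤ n) :
    let N : ℚ := Fintype.card (Equiv.Perm (Fin n))
    let X : Equiv.Perm (Fin n) → ℚ := fun σ =>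
      ((Finset.univ.filter fun p : Fin n × Fin n =>
        (p.2 : ℕ) = (p.1 : ℕ) + d ∧ σ p.2 < σ p.1).card : ℚ)
    (∑ σ : Equiv.Perm (Fin n), X σ ^ 2) / N - ((∑ σ : Equiv.Perm (Fin n), X σ) / N) ^ 2 =
      ((n : ℚ) + d) / 12 := by
  intro N X
  have hn : 0 < n := by omega
  have hX : ∀ σ : Equiv.Perm (Fin n), X σ = ∑ i ∈ Finset.range (n - d),
      (if σ (pt n hn (i + d)) < σ (pt n hn i) then (1:ℚ) else 0) := fun σ => X_eq n d hn σ
  have hN : N = (n ! : ℚ) := by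
    show (Fintype.card (Equiv.Perm (Fin n)) : ℚ) = _
    rw [Fintype.card_perm, Fintype.card_fin]
  have S1 : ∑ σ : Equiv.Perm (Fin n), X σ = ((n - d : ℕ) : ℚ) * ((n ! : ℚ)/2) := by
    rw [Finset.sum_congr rfl (fun σ _ => hX σ), Finset.sum_comm]
    have inner : ∀ i ∈ Finset.range (n - d), (∑ σ : Equiv.Perm (Fin n),
        (if σ (pt n hn (i + d)) < σ (pt n hn i) then (1:ℚ) else 0)) = (n ! : ℚ)/2 := by
      intro i hi
      rw [Finset.mem_range] at hi
      exact count_two _ _ (pt_ne hn (by omega) (by omega) (by omega))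
    rw [Finset.sum_congr rfl inner]
    simp [Finset.sum_const, Finset.card_range, nsmul_eq_mul]
  have S2 : ∑ σ : Equiv.Perm (Fin n), X σ ^ 2
      = ∑ i ∈ Finset.range (n - d), ∑ j ∈ Finset.range (n - d),
        (if i = j then (n ! : ℚ)/2 else if j = i + d ∨ i = j + d then (n ! : ℚ)/6
          else (n ! : ℚ)/4) := by
    have h1 : ∀ σ : Equiv.Perm (Fin n), X σ ^ 2
        = ∑ i ∈ Finset.range (n - d), ∑ j ∈ Finset.range (n - d),
          ((if σ (pt n hn (i + d)) < σ (pt n hn i) then (1:ℚ) else 0) *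
           (if σ (pt n hn (j + d)) < σ (pt n hn j) then (1:ℚ) else 0)) := by
      intro σ
      rw [hX σ, sq, Finset.sum_mul_sum]
    rw [Finset.sum_congr rfl (fun σ _ => h1 σ), Finset.sum_comm]
    apply Finset.sum_congr rfl
    intro i hi
    rw [Finset.sum_comm]
    apply Finset.sum_congr rfl
    intro j hj
    rw [Finset.mem_range] at hi hj
    exact Cval n d hn hd i j (by omega) (by omega)
  rw [S2, grid (n - d) d hd, S1, hN]
  have hQ : (n ! : ℚ) ≠ 0 := Nat.cast_ne_zero.mpr (Nat.factorial_ne_zero n)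
  have c1 : ((n - d : ℕ) : ℚ) = (n:ℚ) - d := by
    rw [Nat.cast_sub (by omega)]
  have c2 : ((n - d - d : ℕ) : ℚ) = (n:ℚ) - 2*d := by
    rw [Nat.cast_sub (by omega), Nat.cast_sub (by omega)]
    ring
  rw [c1, c2]
  field_simp
  ring
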